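/- arXiv:math/0508095 — 5 statements merged into one kernel-verified Lean document; each statement's English description precedes it below -/
import Mathlib

section
/- Let $l_1,\dots,l_d$ be linear forms on $\mathbb{C}^n$ ($n\ge 2$) in general position (every subfamily of at most $n$ of them is linearly independent). For $q\ge 0$ let $r_q$ denote the dimension of the linear span of $l_1^q,\dots,l_d^q$ in the space of homogeneous polynomials of degree $q$. Then for every $q\ge 0$ one has $r_{q+1} \ge \min(d,\, r_q + (n-1))$. -/
open Module Submodule Polynomial

namespace Stmt0Aux

variable {n d : ℕ} (l : Fin d → ((Fin n → ℂ) →ₗ[ℂ] ℂ))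

variable {n d : ℕ} (l : Fin d → ((Fin n → ℂ) →ₗ[ℂ] ℂ))

noncomputable def psi (m : ℕ) : (Fin d → ℂ) →ₗ[ℂ] ((Fin n → ℂ) → ℂ) :=
  Fintype.linearCombination ℂ (fun α : Fin d => fun x : Fin n → ℂ => (l α x) ^ m)

lemma psi_apply (m : ℕ) (c : Fin d → ℂ) (x : Fin n → ℂ) :
    psi l m c x = ∑ α, c α * (l α x) ^ m := by
  simp [psi, Fintype.linearCombination_apply, Finset.sum_apply]

lemma surj_eval (hgen : ∀ s : Finset (Fin d), s.card ≤ n →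
      LinearIndependent ℂ (fun α : s => l α))
    (s : Finset (Fin d)) (hcard : s.card ≤ n) :
    Function.Surjective (LinearMap.pi (fun α : s => l α) : (Fin n → ℂ) →ₗ[ℂ] (s → ℂ)) := by
  have hind := hgen s hcard
  rw [← LinearMap.range_eq_top]
  by_contra hne
  obtain ⟨ξ, hξ0, hξ⟩ := Submodule.exists_dual_map_eq_bot_of_lt_top
    (lt_top_iff_ne_top.2 hne) inferInstance
  have key : ∀ v : Fin n → ℂ, ∑ α : s, l α v * ξ (fun j => if α = j then 1 else 0) = 0 := by
    intro v
    have h0 : ξ ((LinearMap.pi (fun α : s => l α) : (Fin n → ℂ) →ₗ[ℂ] (s → ℂ)) v) = 0 := by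
      rw [← Submodule.mem_bot ℂ, ← hξ]
      exact Submodule.mem_map_of_mem ⟨v, rfl⟩
    rw [LinearMap.pi_apply_eq_sum_univ ξ] at h0
    simpa only [LinearMap.pi_apply, smul_eq_mul] using h0
  have hall : ∀ α : s, ξ (fun j => if α = j then 1 else 0) = 0 := by
    refine Fintype.linearIndependent_iff.1 hind (fun α => ξ (fun j => if α = j then 1 else 0)) ?_
    refine LinearMap.ext fun v => ?_
    simpa [LinearMap.sum_apply, LinearMap.smul_apply, smul_eq_mul, mul_comm] using key v
  apply hξ0
  refine LinearMap.ext fun y => ?_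
  rw [LinearMap.pi_apply_eq_sum_univ ξ]
  simp [hall]



lemma inj_eval (hgen : ∀ s : Finset (Fin d), s.card ≤ n →
      LinearIndependent ℂ (fun α : s => l α))
    (s : Finset (Fin d)) (hcard : s.card = n)
    (v : Fin n → ℂ) (hv : ∀ α ∈ s, l α v = 0) : v = 0 := by
  have hsurj := surj_eval l hgen s hcard.le
  have hfr : finrank ℂ (Fin n → ℂ) = finrank ℂ (s → ℂ) := by
    simp [Module.finrank_fintype_fun_eq_card, hcard]
  have hinj := (LinearMap.injective_iff_surjective_of_finrank_eq_finrank hfr).2 hsurj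
  have : (LinearMap.pi (fun α : s => l α) : (Fin n → ℂ) →ₗ[ℂ] (s → ℂ)) v = 0 := by
    funext α
    exact hv α α.2
  simpa using hinj (by rw [this, map_zero] : _ = (LinearMap.pi (fun α : s => l α) :
    (Fin n → ℂ) →ₗ[ℂ] (s → ℂ)) 0)

lemma supp_ge (hgen : ∀ s : Finset (Fin d), s.card ≤ n →
      LinearIndependent ℂ (fun α : s => l α))
    {m : ℕ} (hm : 1 ≤ m) {c : Fin d → ℂ}
    (hc : ∀ x, ∑ α, c α * (l α x) ^ m = 0) (hc0 : c ≠ 0) :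
    ∃ t : Finset (Fin d), t.card = n ∧ ∀ α ∈ t, c α ≠ 0 := by
  classical
  set s := Finset.univ.filter (fun α => c α ≠ 0) with hs
  have hmem : ∀ α, α ∈ s ↔ c α ≠ 0 := by intro α; simp [hs]
  by_cases hcard : n ≤ s.card
  · obtain ⟨t, hts, htc⟩ := Finset.exists_subset_card_eq hcard
    exact ⟨t, htc, fun α hα => (hmem α).1 (hts hα)⟩
  push_neg at hcard
  exfalso
  obtain ⟨β, hβc⟩ := Function.ne_iff.1 hc0
  have hβ : β ∈ s := (hmem β).2 (by simpa using hβc)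
  obtain ⟨w, hw⟩ := surj_eval l hgen s hcard.le
    (Pi.single (⟨β, hβ⟩ : s) 1)
  have hwα : ∀ α : s, l α w = Pi.single (M := fun _ : s => ℂ) (⟨β, hβ⟩ : s) 1 α := fun α => by
    simpa [LinearMap.pi_apply] using congrFun hw α
  have h0 := hc w
  rw [Finset.sum_eq_single β] at h0
  · have : l β w = 1 := by
      have := hwα ⟨β, hβ⟩
      simpa using this
    rw [this] at h0
    simp at h0
    exact (hmem β).1 hβ h0
  · intro b _ hbβ
    by_cases hbs : b ∈ s
    · have : l b w = 0 := by
        have := hwα ⟨b, hbs⟩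
        rwa [Pi.single_apply, if_neg (by simpa [Subtype.ext_iff] using hbβ)] at this
      rw [this, zero_pow (by omega), mul_zero]
    · have : c b = 0 := by simpa [hmem] using hbs
      rw [this, zero_mul]
  · intro h; exact absurd (Finset.mem_univ β) h

lemma step_mem (q : ℕ) {c : Fin d → ℂ}
    (hc : ∀ x, ∑ α, c α * (l α x) ^ (q + 1) = 0) (v : Fin n → ℂ) :
    ∀ x, ∑ α, (c α * l α v) * (l α x) ^ q = 0 := by
  intro x
  have hP : (∑ α, C (c α) * (C (l α x) + C (l α v) * X) ^ (q + 1) : ℂ[X]) = 0 := by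
    apply Polynomial.funext
    intro t
    have h2 : ∀ α : Fin d, l α x + l α v * t = l α (x + t • v) := by
      intro α
      simp [map_add, map_smul, smul_eq_mul]
      ring
    simp only [eval_zero, eval_finset_sum, eval_mul, eval_pow, eval_add, eval_C, eval_X]
    simp_rw [h2]
    exact hc _
  have hD := congrArg (fun p : ℂ[X] => (Polynomial.derivative p).eval 0) hP
  simp only [derivative_sum, derivative_C_mul, derivative_pow, derivative_add, derivative_C,
    derivative_mul, derivative_X, zero_add, mul_one, eval_finset_sum, eval_mul, eval_pow,
    eval_add, eval_C, eval_X, eval_natCast, mul_zero, add_zero, map_zero, eval_zero,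
    Finset.sum_const_zero, zero_mul] at hD
  have hfac : ((q : ℂ) + 1) * ∑ α, (c α * l α v) * (l α x) ^ q = 0 := by
    rw [Finset.mul_sum]
    rw [← hD]
    apply Finset.sum_congr rfl
    intro α _
    push_cast
    ring
  rcases mul_eq_zero.1 hfac with h | h
  · exact absurd h (by exact_mod_cast Nat.succ_ne_zero q)
  · exact h



/-- span of the Hadamard-type products -/
noncomputable def MD (D : Submodule ℂ (Fin d → ℂ)) : Submodule ℂ (Fin d → ℂ) :=
  Submodule.span ℂ {x | ∃ c ∈ D, ∃ v : Fin n → ℂ, x = fun α => c α * l α v}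

lemma MD_mono {D D' : Submodule ℂ (Fin d → ℂ)} (h : D' ≤ D) : MD l D' ≤ MD l D := by
  apply Submodule.span_mono
  rintro x ⟨c, hc, v, rfl⟩
  exact ⟨c, h hc, v, rfl⟩

noncomputable def gmap (c : Fin d → ℂ) : (Fin n → ℂ) →ₗ[ℂ] (Fin d → ℂ) :=
  LinearMap.pi (fun α => c α • l α)

lemma gmap_apply (c : Fin d → ℂ) (v : Fin n → ℂ) (α : Fin d) :
    gmap l c v α = c α * l α v := by
  simp [gmap, LinearMap.pi_apply, smul_eq_mul]

set_option synthInstance.maxHeartbeats 1000000 in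
lemma lemB (hn : 1 ≤ n) (hgen : ∀ s : Finset (Fin d), s.card ≤ n →
      LinearIndependent ℂ (fun α : s => l α)) :
    ∀ k : ℕ, 1 ≤ k → ∀ D : Submodule ℂ (Fin d → ℂ),
    (∀ c ∈ D, c ≠ 0 → ∃ t : Finset (Fin d), t.card = n ∧ ∀ α ∈ t, c α ≠ 0) →
    finrank ℂ D = k → k + (n - 1) ≤ finrank ℂ (MD l D) := by
  intro k
  induction k with
  | zero => omega
  | succ k ih =>
    intro _ D hsupp hrk
    -- find a nonzero element
    have hDbot : D ≠ ⊥ := by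
      intro h
      rw [h, finrank_bot] at hrk
      omega
    obtain ⟨c₀, hc₀D, hc₀⟩ := Submodule.exists_mem_ne_zero_of_ne_bot hDbot
    rcases Nat.eq_zero_or_pos k with hk0 | hkpos
    · -- base case : rank 1
      subst hk0
      obtain ⟨t, htc, htne⟩ := hsupp c₀ hc₀D hc₀
      -- the map gmap c₀ is injective
      have hker : LinearMap.ker (gmap l c₀) = ⊥ := by
        rw [LinearMap.ker_eq_bot']
        intro v hv
        refine inj_eval l hgen t htc v fun α hα => ?_
        have := congrFun hv α
        rw [gmap_apply] at this
        simp only [Pi.zero_apply] at this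
        rcases mul_eq_zero.1 this with h | h
        · exact absurd h (htne α hα)
        · exact h
      have hrange : LinearMap.range (gmap l c₀) ≤ MD l D := by
        rintro x ⟨v, rfl⟩
        apply Submodule.subset_span
        exact ⟨c₀, hc₀D, v, funext fun α => (gmap_apply l c₀ v α).symm⟩
      have h1 : finrank ℂ (LinearMap.range (gmap l c₀)) = n := by
        have := LinearMap.finrank_range_add_finrank_ker (gmap l c₀)
        rw [hker, finrank_bot, add_zero, Module.finrank_fintype_fun_eq_card,
          Fintype.card_fin] at this
        exact this
      have := Submodule.finrank_mono hrange
      omega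
    · -- inductive step
      obtain ⟨j, hj⟩ := Function.ne_iff.1 hc₀
      have hj : c₀ j ≠ 0 := by simpa using hj
      -- the coordinate functional on D
      set f : D →ₗ[ℂ] ℂ := (LinearMap.proj j).comp D.subtype with hf
      have hfc₀ : f ⟨c₀, hc₀D⟩ = c₀ j := rfl
      have hrange_f : LinearMap.range f = ⊤ := by
        apply LinearMap.range_eq_top.2
        intro z
        refine ⟨⟨(z / c₀ j) • c₀, D.smul_mem _ hc₀D⟩, ?_⟩
        show ((z / c₀ j) • c₀) j = z
        rw [Pi.smul_apply, smul_eq_mul]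
        field_simp
      have hker_rk : finrank ℂ (LinearMap.ker f) = k := by
        have h1 := LinearMap.finrank_range_add_finrank_ker f
        rw [hrange_f, finrank_top] at h1
        have : finrank ℂ ℂ = 1 := Module.finrank_self ℂ
        omega
      set D' : Submodule ℂ (Fin d → ℂ) := (LinearMap.ker f).map D.subtype with hD'
      have hD'le : D' ≤ D := Submodule.map_subtype_le D _
      have hD'rk : finrank ℂ D' = k := by
        rw [← hker_rk]
        exact (Submodule.equivSubtypeMap D (LinearMap.ker f)).symm.finrank_eq
      have hD'j : ∀ c ∈ D', c j = 0 := by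
        rintro c ⟨⟨y, hyD⟩, hyk, rfl⟩
        simpa [hf] using hyk
      have hIH := ih hkpos D' (fun c hc hc0 => hsupp c (hD'le hc) hc0) hD'rk
      -- the new element
      have hlj : l j ≠ 0 := by
        have := hgen {j} (by simpa using (by omega : 1 ≤ n))
        have h2 := this.ne_zero ⟨j, Finset.mem_singleton_self j⟩
        simpa using h2
      obtain ⟨v₀, hv₀⟩ : ∃ v₀, l j v₀ ≠ 0 := by
        by_contra h
        push_neg at h
        exact hlj (LinearMap.ext fun v => h v)
      set w : Fin d → ℂ := fun α => c₀ α * l α v₀ with hw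
      have hwMD : w ∈ MD l D := Submodule.subset_span ⟨c₀, hc₀D, v₀, rfl⟩
      have hwj : w j ≠ 0 := mul_ne_zero hj hv₀
      have hMD'H : MD l D' ≤ LinearMap.ker (LinearMap.proj j :
          (Fin d → ℂ) →ₗ[ℂ] ℂ) := by
        rw [MD, Submodule.span_le]
        rintro x ⟨c, hc, v, rfl⟩
        simp only [SetLike.mem_coe, LinearMap.mem_ker, LinearMap.proj_apply]
        rw [hD'j c hc, zero_mul]
      have hwnot : w ∉ MD l D' := by
        intro hmem
        exact hwj (hMD'H hmem)
      have hlt : MD l D' < MD l D := lt_of_le_of_ne (MD_mono l hD'le)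
        (fun h => hwnot (h ▸ hwMD))
      have := Submodule.finrank_lt_finrank_of_lt hlt
      omega


end Stmt0Aux

open Stmt0Aux

/-- For linear forms in general position on ℂ^n (n ≥ 2), the rank r_q of the
span of the q-th powers satisfies r_{q+1} ≥ min(d, r_q + (n-1)). -/
theorem stmt0 (n d : ℕ) (hn : 2 ≤ n) (hd : 1 ≤ d)
    (l : Fin d → ((Fin n → ℂ) →ₗ[ℂ] ℂ))
    (hgen : ∀ s : Finset (Fin d), s.card ≤ n →
      LinearIndependent ℂ (fun α : s => l α))
    (r : ℕ → ℕ)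
    (hr : ∀ q : ℕ, r q = Module.finrank ℂ
      (Submodule.span ℂ (Set.range fun α : Fin d => fun x : Fin n → ℂ => (l α x) ^ q))) :
    ∀ q : ℕ, min d (r q + (n - 1)) ≤ r (q + 1) := by
  intro q
  have hrank : ∀ m : ℕ, r m = finrank ℂ (LinearMap.range (psi l m)) := by
    intro m
    rw [hr m, psi, Fintype.range_linearCombination]
  have hrn : ∀ m : ℕ, r m + finrank ℂ (LinearMap.ker (psi l m)) = d := by
    intro m
    rw [hrank m]
    have := LinearMap.finrank_range_add_finrank_ker (psi l m)
    rwa [Module.finrank_fintype_fun_eq_card, Fintype.card_fin] at this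
  -- the kernel at level q+1
  set K : Submodule ℂ (Fin d → ℂ) := LinearMap.ker (psi l (q + 1)) with hK
  have hker_mem : ∀ c ∈ K, ∀ x, ∑ α, c α * (l α x) ^ (q + 1) = 0 := by
    intro c hc x
    rw [← psi_apply l (q + 1) c x]
    rw [hK, LinearMap.mem_ker] at hc
    rw [hc]
    rfl
  rcases Nat.eq_zero_or_pos (finrank ℂ K) with h0 | hpos
  · have := hrn (q + 1)
    rw [h0] at this
    omega
  · -- support condition
    have hsupp : ∀ c ∈ K, c ≠ 0 →
        ∃ t : Finset (Fin d), t.card = n ∧ ∀ α ∈ t, c α ≠ 0 := by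
      intro c hc hc0
      exact supp_ge l hgen (by omega) (hker_mem c hc) hc0
    have hB := lemB l (by omega) hgen (finrank ℂ K) hpos K hsupp rfl
    have hMDle : MD l K ≤ LinearMap.ker (psi l q) := by
      rw [MD, Submodule.span_le]
      rintro x ⟨c, hc, v, rfl⟩
      simp only [SetLike.mem_coe, LinearMap.mem_ker]
      funext y
      rw [psi_apply]
      exact step_mem l q (hker_mem c hc) v y
    have hmono := Submodule.finrank_mono hMDle
    have h1 := hrn q
    have h2 : r (q + 1) + finrank ℂ K = d := by rw [hK]; exact hrn (q + 1)
    omega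
end

section
/- Let $l_1,\dots,l_d$ be linear forms on $\mathbb{C}^n$ ($n\ge 2$) in general position. Then for every $q\ge 0$, the dimension $r_q$ of the span of $l_1^q,\dots,l_d^q$ satisfies $r_q \ge \min(d,\, q(n-1)+1)$. -/
open Finset

/-- Inner inclusion-exclusion sum. -/
lemma aux_inner {q : ℕ} (S : Finset (Fin q)) :
    ∑ T : Finset (Fin q), (-1 : ℂ) ^ (q - T.card) * (if S ⊆ T then (1:ℂ) else 0)
      = if S = Finset.univ then 1 else 0 := by
  rw [← Equiv.sum_comp (⟨compl, compl, compl_compl, compl_compl⟩ : Finset (Fin q) ≃ Finset (Fin q))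
      (fun T => (-1 : ℂ) ^ (q - T.card) * (if S ⊆ T then (1:ℂ) else 0))]
  simp only [Equiv.coe_fn_mk]
  have h1 : ∀ U : Finset (Fin q), q - (Uᶜ).card = U.card := by
    intro U
    have := Finset.card_compl U
    have h2 := Finset.card_le_univ U
    simp only [Fintype.card_fin] at this h2
    omega
  have h2 : ∀ U : Finset (Fin q), (S ⊆ Uᶜ) ↔ (U ⊆ Sᶜ) := fun U => Finset.subset_compl_comm
  calc ∑ U : Finset (Fin q), (-1 : ℂ) ^ (q - (Uᶜ).card) * (if S ⊆ Uᶜ then (1:ℂ) else 0)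
      = ∑ U : Finset (Fin q), (if U ∈ Sᶜ.powerset then ((-1 : ℂ) ^ U.card) else 0) := by
        refine Finset.sum_congr rfl fun U _ => ?_
        rw [h1 U]
        by_cases h : U ⊆ Sᶜ
        · rw [if_pos ((h2 U).mpr h), if_pos (Finset.mem_powerset.mpr h), mul_one]
        · rw [if_neg (fun hc => h ((h2 U).mp hc)), if_neg (fun hc => h (Finset.mem_powerset.mp hc)), mul_zero]
    _ = ∑ U ∈ Sᶜ.powerset, ((-1 : ℂ) ^ U.card) := by
        rw [← Finset.sum_filter]
        congr 1
        ext U; simp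
    _ = if S = Finset.univ then 1 else 0 := by
        have hz := Finset.sum_powerset_neg_one_pow_card (x := Sᶜ)
        have : ((∑ m ∈ Sᶜ.powerset, (-1 : ℤ) ^ m.card : ℤ) : ℂ)
            = ∑ U ∈ Sᶜ.powerset, ((-1 : ℂ) ^ U.card) := by push_cast; rfl
        rw [← this, hz]
        have : Sᶜ = ∅ ↔ S = Finset.univ := by
          constructor
          · intro h; rwa [compl_eq_empty_iff] at h
          · intro h; rw [h]; simp
        split_ifs with h h' h' <;> simp_all

/-- Polarization identity. -/
lemma polar {q : ℕ} (w : Fin q → ℂ) :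
    ∑ T : Finset (Fin q), (-1 : ℂ) ^ (q - T.card) * (∑ j ∈ T, w j) ^ q
      = (q.factorial : ℂ) * ∏ j, w j := by
  classical
  set S : (Fin q → ℕ) → Finset (Fin q) := fun k => Finset.univ.filter (fun j => k j ≠ 0) with hS
  have h2 : ∀ (T : Finset (Fin q)) (k : Fin q → ℕ),
      (∏ j : Fin q, (if j ∈ T then w j else 0) ^ (k j))
        = (if S k ⊆ T then ∏ j, w j ^ k j else 0) := by
    intro T k
    by_cases hT : S k ⊆ T
    · rw [if_pos hT]
      refine Finset.prod_congr rfl fun j _ => ?_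
      by_cases hj : j ∈ T
      · rw [if_pos hj]
      · have hk : k j = 0 := by
          by_contra h
          exact hj (hT (Finset.mem_filter.mpr ⟨Finset.mem_univ _, h⟩))
        rw [hk, pow_zero, pow_zero]
    · rw [if_neg hT]
      obtain ⟨j, hjS, hjT⟩ := Finset.not_subset.mp hT
      refine Finset.prod_eq_zero (Finset.mem_univ j) ?_
      have hk : k j ≠ 0 := (Finset.mem_filter.mp hjS).2
      rw [if_neg hjT, zero_pow hk]
  calc ∑ T : Finset (Fin q), (-1 : ℂ) ^ (q - T.card) * (∑ j ∈ T, w j) ^ q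
      = ∑ T : Finset (Fin q), ∑ k ∈ Finset.piAntidiag Finset.univ q,
          ((Nat.multinomial Finset.univ k : ℂ) * ∏ j, w j ^ k j)
            * ((-1 : ℂ) ^ (q - T.card) * (if S k ⊆ T then (1:ℂ) else 0)) := by
        refine Finset.sum_congr rfl fun T _ => ?_
        have hrw : (∑ j ∈ T, w j) = ∑ j : Fin q, (if j ∈ T then w j else 0) := by
          rw [Finset.sum_ite_mem, Finset.univ_inter]
        rw [hrw, Finset.sum_pow_eq_sum_piAntidiag, Finset.mul_sum]
        refine Finset.sum_congr rfl fun k _ => ?_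
        rw [h2 T k]
        by_cases h : S k ⊆ T <;> simp [h] <;> ring
    _ = ∑ k ∈ Finset.piAntidiag Finset.univ q,
          ((Nat.multinomial Finset.univ k : ℂ) * ∏ j, w j ^ k j)
            * (if S k = Finset.univ then (1:ℂ) else 0) := by
        rw [Finset.sum_comm]
        refine Finset.sum_congr rfl fun k _ => ?_
        rw [← Finset.mul_sum, aux_inner (S k)]
    _ = (q.factorial : ℂ) * ∏ j, w j := by
        rw [Finset.sum_eq_single_of_mem (fun _ => 1)]
        · have hm : Nat.multinomial (Finset.univ : Finset (Fin q)) (fun _ => 1) = q.factorial := by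
            have := Nat.multinomial_spec (Finset.univ : Finset (Fin q)) (fun _ => 1)
            simpa using this
          have hs1 : S (fun _ => 1) = Finset.univ := by
            ext j; simp [hS]
          simp [hm, hs1]
        · rw [Finset.mem_piAntidiag]
          constructor
          · simp
          · intro i _; exact Finset.mem_univ i
        · intro k hk hne
          have hSk : S k ≠ Finset.univ := by
            intro hSk
            apply hne
            have hall : ∀ j, 1 ≤ k j := by
              intro j
              have : j ∈ S k := hSk ▸ Finset.mem_univ j
              have := (Finset.mem_filter.mp this).2
              omega
            have hsum : (∑ j : Fin q, k j) = q := (Finset.mem_piAntidiag.mp hk).1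
            have hsum1 : (∑ _j : Fin q, 1) = q := by simp
            have := (Finset.sum_eq_sum_iff_of_le (fun i _ => hall i)).mp (by rw [hsum, hsum1])
            funext j
            exact ((this j (Finset.mem_univ j)).symm : k j = 1)
          rw [if_neg hSk, mul_zero]

lemma exists_eval {ι : Type*} [Fintype ι] {n : ℕ} (φ : ι → ((Fin n → ℂ) →ₗ[ℂ] ℂ))
    (h : LinearIndependent ℂ φ) (c : ι → ℂ) : ∃ v : Fin n → ℂ, ∀ i, φ i v = c i := by
  classical
  suffices hs : Function.Surjective (LinearMap.pi φ : (Fin n → ℂ) →ₗ[ℂ] (ι → ℂ)) by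
    obtain ⟨v, hv⟩ := hs c
    exact ⟨v, fun i => congr_fun hv i⟩
  rw [← LinearMap.range_eq_top]
  by_contra hne
  have hlt : LinearMap.range (LinearMap.pi φ) < ⊤ := lt_top_iff_ne_top.mpr hne
  obtain ⟨f, hf0, hmap⟩ := Submodule.exists_dual_map_eq_bot_of_lt_top hlt inferInstance
  set a : ι → ℂ := fun i => f (fun j => if i = j then 1 else 0) with ha
  have hker : ∀ x : ι → ℂ, x ∈ LinearMap.range (LinearMap.pi φ) → f x = 0 := by
    intro x hx
    have hmem : f x ∈ Submodule.map f (LinearMap.range (LinearMap.pi φ)) :=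
      Submodule.mem_map_of_mem hx
    rw [hmap] at hmem
    simpa using hmem
  have hrel : ∑ i, a i • φ i = 0 := by
    refine LinearMap.ext fun v => ?_
    have h1 : f ((LinearMap.pi φ) v) = 0 := hker _ ⟨v, rfl⟩
    rw [LinearMap.pi_apply_eq_sum_univ f] at h1
    simp only [LinearMap.pi_apply] at h1
    simpa [ha, smul_eq_mul, mul_comm] using h1
  have hz : ∀ i, a i = 0 := Fintype.linearIndependent_iff.mp h a hrel
  apply hf0
  refine LinearMap.ext fun x => ?_
  rw [LinearMap.pi_apply_eq_sum_univ f x]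
  have h5 : ∀ i, (f fun j => if i = j then 1 else 0) = 0 := hz
  simp [h5]
lemma key {n d : ℕ} (hn : 2 ≤ n) (l : Fin d → ((Fin n → ℂ) →ₗ[ℂ] ℂ))
    (hgen : ∀ s : Finset (Fin d), s.card ≤ n → LinearIndependent ℂ (fun α : s => l α))
    (q : ℕ) (s : Finset (Fin d)) (hs : s.card ≤ q * (n - 1) + 1) :
    LinearIndependent ℂ (fun α : s => (fun x : Fin n → ℂ => (l α x) ^ q)) := by
  classical
  rw [Fintype.linearIndependent_iff]
  intro g hg α0
  set t := s.erase ↑α0 with ht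
  have htcard : t.card ≤ q * (n - 1) := by
    have h1 : t.card = s.card - 1 := Finset.card_erase_of_mem α0.2
    have h2 : 1 ≤ s.card := Finset.card_pos.mpr ⟨↑α0, α0.2⟩
    omega
  have hn1 : 0 < n - 1 := by omega
  set e := (Fintype.equivFin ↥t) with he
  set idx : Fin d → ℕ := fun β => if hβ : β ∈ t then (e ⟨β, hβ⟩ : ℕ) / (n - 1) else 0 with hidx
  have hidxlt : ∀ β ∈ t, idx β < q := by
    intro β hβ
    have h1 : (e ⟨β, hβ⟩ : ℕ) < q * (n - 1) := by
      refine lt_of_lt_of_le ?_ htcard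
      have := (e ⟨β, hβ⟩).isLt
      simpa [Fintype.card_coe] using this
    simp only [hidx, dif_pos hβ]
    exact (Nat.div_lt_iff_lt_mul hn1).mpr h1
  set B : Fin q → Finset (Fin d) := fun j => t.filter (fun β => idx β = (j : ℕ)) with hB
  have hBcard : ∀ j, (B j).card ≤ n - 1 := by
    intro j
    have : (B j).card ≤ (Finset.Ico ((j : ℕ) * (n-1)) ((j : ℕ) * (n-1) + (n-1))).card := by
      refine Finset.card_le_card_of_injOn
        (fun β => if hβ : β ∈ t then (e ⟨β, hβ⟩ : ℕ) else 0) ?_ ?_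
      · intro β hβ
        have hβt : β ∈ t := Finset.mem_of_mem_filter _ hβ
        have hidxβ : idx β = (j : ℕ) := (Finset.mem_filter.mp hβ).2
        rw [hidx] at hidxβ
        simp only [dif_pos hβt] at hidxβ
        simp only [dif_pos hβt]
        rw [Finset.mem_coe, Finset.mem_Ico]
        constructor
        · calc (j : ℕ) * (n-1) = ((e ⟨β, hβt⟩ : ℕ) / (n-1)) * (n-1) := by rw [hidxβ]
            _ ≤ (e ⟨β, hβt⟩ : ℕ) := Nat.div_mul_le_self _ _
        · have hlt : (e ⟨β, hβt⟩ : ℕ) < ((j : ℕ) + 1) * (n-1) := by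
            refine (Nat.div_lt_iff_lt_mul hn1).mp ?_
            rw [hidxβ]
            exact Nat.lt_succ_self _
          calc (e ⟨β, hβt⟩ : ℕ) < ((j : ℕ) + 1) * (n-1) := hlt
            _ = (j : ℕ) * (n-1) + (n-1) := by ring
      · intro β1 h1 β2 h2 heq
        have hβ1 : β1 ∈ t := Finset.mem_of_mem_filter _ h1
        have hβ2 : β2 ∈ t := Finset.mem_of_mem_filter _ h2
        simp only [dif_pos hβ1, dif_pos hβ2] at heq
        have := e.injective (Fin.val_injective heq)
        exact congrArg Subtype.val this
    simpa using this
  have hv : ∀ j : Fin q, ∃ v : Fin n → ℂ, l ↑α0 v = 1 ∧ ∀ β ∈ B j, l β v = 0 := by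
    intro j
    set tj := insert (↑α0 : Fin d) (B j) with htj
    have hcard : tj.card ≤ n := by
      have h1 := Finset.card_insert_le (↑α0 : Fin d) (B j)
      have h2 := hBcard j
      rw [htj]
      omega
    obtain ⟨v, hveq⟩ := exists_eval (fun β : tj => l ↑β) (hgen tj hcard)
      (fun β => if (β : Fin d) = ↑α0 then 1 else 0)
    refine ⟨v, ?_, ?_⟩
    · have := hveq ⟨↑α0, Finset.mem_insert_self _ _⟩
      simpa using this
    · intro β hβ
      have hβt : β ∈ t := Finset.mem_of_mem_filter _ hβ
      have hne : β ≠ ↑α0 := Finset.ne_of_mem_erase hβt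
      have := hveq ⟨β, Finset.mem_insert_of_mem hβ⟩
      simpa [hne] using this
  choose v hv1 hv2 using hv
  have heval : ∀ x : Fin n → ℂ, ∑ α : s, g α * (l ↑α x) ^ q = 0 := by
    intro x
    have h1 := congr_fun hg x
    simpa [Finset.sum_apply] using h1
  have h00 : ∑ T : Finset (Fin q), (-1 : ℂ) ^ (q - T.card)
      * (∑ α : s, g α * (l ↑α (∑ j ∈ T, v j)) ^ q) = 0 := by
    refine Finset.sum_eq_zero fun T _ => ?_
    rw [heval, mul_zero]
  have hbig : ∑ α : s, g α * ((q.factorial : ℂ) * ∏ j : Fin q, l ↑α (v j)) = 0 := by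
    rw [← h00]
    calc ∑ α : s, g α * ((q.factorial : ℂ) * ∏ j : Fin q, l ↑α (v j))
        = ∑ α : s, ∑ T : Finset (Fin q),
            g α * ((-1 : ℂ) ^ (q - T.card) * (∑ j ∈ T, l ↑α (v j)) ^ q) := by
          refine Finset.sum_congr rfl fun α _ => ?_
          rw [← Finset.mul_sum, polar (fun j => l ↑α (v j))]
      _ = ∑ T : Finset (Fin q), ∑ α : s,
            g α * ((-1 : ℂ) ^ (q - T.card) * (∑ j ∈ T, l ↑α (v j)) ^ q) := Finset.sum_comm
      _ = ∑ T : Finset (Fin q), (-1 : ℂ) ^ (q - T.card)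
            * (∑ α : s, g α * (l ↑α (∑ j ∈ T, v j)) ^ q) := by
          refine Finset.sum_congr rfl fun T _ => ?_
          rw [Finset.mul_sum]
          refine Finset.sum_congr rfl fun α _ => ?_
          rw [map_sum]
          ring
  rw [Fintype.sum_eq_single α0 ?_] at hbig
  · have hprod : (∏ j : Fin q, l ↑α0 (v j)) = 1 := by
      refine Finset.prod_eq_one fun j _ => hv1 j
    rw [hprod, mul_one] at hbig
    have hq : (q.factorial : ℂ) ≠ 0 := Nat.cast_ne_zero.mpr (Nat.factorial_ne_zero q)
    rcases mul_eq_zero.mp hbig with h | h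
    · exact h
    · exact absurd h hq
  · intro α hα
    have hαt : (↑α : Fin d) ∈ t := by
      rw [ht]
      exact Finset.mem_erase.mpr ⟨fun h => hα (Subtype.ext h), α.2⟩
    set j : Fin q := ⟨idx ↑α, hidxlt _ hαt⟩ with hj
    have hmem : (↑α : Fin d) ∈ B j := Finset.mem_filter.mpr ⟨hαt, rfl⟩
    have hzero : l ↑α (v j) = 0 := hv2 j ↑α hmem
    rw [Finset.prod_eq_zero (Finset.mem_univ j) hzero]
    ring

/-- For linear forms in general position on ℂ^n (n ≥ 2),
the rank r_q of the span of the q-th powers satisfies r_q ≥ min(d, q(n-1)+1). -/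
theorem stmt1 (n d : ℕ) (hn : 2 ≤ n) (hd : 1 ≤ d)
    (l : Fin d → ((Fin n → ℂ) →ₗ[ℂ] ℂ))
    (hgen : ∀ s : Finset (Fin d), s.card ≤ n →
      LinearIndependent ℂ (fun α : s => l α))
    (r : ℕ → ℕ)
    (hr : ∀ q : ℕ, r q = Module.finrank ℂ
      (Submodule.span ℂ (Set.range fun α : Fin d => fun x : Fin n → ℂ => (l α x) ^ q))) :
    ∀ q : ℕ, min d (q * (n - 1) + 1) ≤ r q := by
  intro q
  rw [hr q]
  set F : Fin d → ((Fin n → ℂ) → ℂ) := fun α => fun x => (l α x) ^ q with hF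
  obtain ⟨s, hs_sub, hs_card⟩ := Finset.exists_subset_card_eq
    (s := (Finset.univ : Finset (Fin d))) (n := min d (q * (n - 1) + 1))
    (by simpa using min_le_left d (q * (n - 1) + 1))
  have hindep := key hn l hgen q s (by rw [hs_card]; exact min_le_right _ _)
  set W := Submodule.span ℂ (Set.range F) with hW
  haveI : FiniteDimensional ℂ W := FiniteDimensional.span_of_finite ℂ (Set.finite_range F)
  have hmem : ∀ α : s, F ↑α ∈ W := fun α => Submodule.subset_span (Set.mem_range_self _)
  have h2 : LinearIndependent ℂ (fun α : s => (⟨F ↑α, hmem α⟩ : W)) := by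
    apply LinearIndependent.of_comp W.subtype
    exact hindep
  have h3 := h2.fintype_card_le_finrank
  simpa [Fintype.card_coe, hs_card] using h3
end

section
/- Let $\theta_1,\dots,\theta_d\in\mathbb{C}$ be pairwise distinct, and for each $\alpha$ let $l_\alpha(x)=\sum_{\mu=0}^{n-1}\theta_\alpha^{\mu}x_\mu$ be a linear form on $\mathbb{C}^n$ ($n\ge 2$). Then for every $q\ge 0$, the dimension of the span of $l_1^q,\dots,l_d^q$ equals $\min(d,\, q(n-1)+1)$. -/
open Polynomial Finset

/-- The coefficients of `(1 + X + ... + X^(n-1))^q` are positive up to degree `q*(n-1)`. -/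
lemma coeff_geom_pow_pos (n : ℕ) (hn : 1 ≤ n) :
    ∀ q j : ℕ, j ≤ q * (n - 1) →
      0 < (((∑ μ ∈ Finset.range n, (Polynomial.X : Polynomial ℕ) ^ μ)) ^ q).coeff j := by
  set S : Polynomial ℕ := ∑ μ ∈ Finset.range n, (Polynomial.X : Polynomial ℕ) ^ μ with hS
  have hcoeffS : ∀ b : ℕ, S.coeff b = if b < n then 1 else 0 := by
    intro b
    rw [hS, Polynomial.finset_sum_coeff]
    simp only [Polynomial.coeff_X_pow]
    rw [Finset.sum_ite_eq (Finset.range n) b (fun _ => 1)]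
    simp [Finset.mem_range]
  intro q
  induction q with
  | zero =>
      intro j hj
      simp only [Nat.zero_mul, Nat.le_zero] at hj
      simp [hj]
  | succ q ih =>
      intro j hj
      have key : ∃ a b : ℕ, a + b = j ∧ a ≤ q * (n - 1) ∧ b < n := by
        by_cases h : j ≤ q * (n - 1)
        · exact ⟨j, 0, by omega, h, by omega⟩
        · refine ⟨q * (n - 1), j - q * (n - 1), by omega, le_rfl, ?_⟩
          have : (q + 1) * (n - 1) = q * (n - 1) + (n - 1) := by ring
          omega
      obtain ⟨a, b, hab, ha, hb⟩ := key
      have hpos : 0 < (S ^ q).coeff a * S.coeff b := by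
        have h1 := ih a ha
        have h2 : S.coeff b = 1 := by rw [hcoeffS]; simp [hb]
        rw [h2]; simpa using h1
      have : S ^ (q + 1) = S ^ q * S := by ring
      rw [this, Polynomial.coeff_mul]
      calc 0 < (S ^ q).coeff a * S.coeff b := hpos
        _ ≤ ∑ x ∈ Finset.HasAntidiagonal.antidiagonal j, (S ^ q).coeff x.1 * S.coeff x.2 :=
          Finset.single_le_sum (f := fun x => (S ^ q).coeff x.1 * S.coeff x.2)
            (fun _ _ => Nat.zero_le _) (Finset.HasAntidiagonal.mem_antidiagonal.mpr hab : (a, b) ∈ Finset.HasAntidiagonal.antidiagonal j)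

/-- Degree bound for powers of ∑ C(a μ) X^μ. -/
lemma natDegree_lin_pow {R : Type*} [CommSemiring R] [Nontrivial R] (n q : ℕ) (a : Fin n → R) :
    ((∑ μ : Fin n, Polynomial.C (a μ) * Polynomial.X ^ (μ : ℕ)) ^ q).natDegree ≤ q * (n - 1) := by
  refine Polynomial.natDegree_pow_le.trans (Nat.mul_le_mul_left _ ?_)
  refine Polynomial.natDegree_sum_le_of_forall_le _ _ (fun μ _ => ?_)
  refine (Polynomial.natDegree_C_mul_le _ _).trans ?_
  rw [Polynomial.natDegree_X_pow]
  have := μ.2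
  omega

/-- Any family of at most `q*(n-1)+1` of the power functions is linearly independent. -/
lemma indep_powers (n q m : ℕ) (hn : 1 ≤ n) (hm : m ≤ q * (n - 1) + 1) (θ : Fin m → ℂ)
    (hθ : Function.Injective θ) :
    LinearIndependent ℂ (fun α : Fin m =>
      fun x : Fin n → ℂ => (∑ μ : Fin n, θ α ^ (μ : ℕ) * x μ) ^ q) := by
  rw [Fintype.linearIndependent_iff]
  intro g hg
  set N := q * (n - 1) + 1 with hN
  -- the ℕ polynomial and its coefficients
  set S : Polynomial ℕ := ∑ μ ∈ Finset.range n, (Polynomial.X : Polynomial ℕ) ^ μ with hS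
  set K : ℕ → ℂ := fun j => ((S ^ q).coeff j : ℂ) with hK
  -- complex version
  set Sc : Polynomial ℂ := ∑ μ ∈ Finset.range n, (Polynomial.X : Polynomial ℂ) ^ μ with hSc
  have hmap : (S ^ q).map (Nat.castRingHom ℂ) = Sc ^ q := by
    rw [Polynomial.map_pow]
    congr 1
    rw [hS, Polynomial.map_sum]
    simp [hSc]
  have hdeg : (Sc ^ q).natDegree < N := by
    rw [← hmap]
    refine lt_of_le_of_lt Polynomial.natDegree_map_le ?_
    refine lt_of_le_of_lt (Polynomial.natDegree_pow_le) ?_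
    have : S.natDegree ≤ n - 1 := by
      refine Polynomial.natDegree_sum_le_of_forall_le _ _ (fun μ hμ => ?_)
      simp only [Polynomial.natDegree_X_pow]
      exact Nat.le_sub_one_of_lt (Finset.mem_range.mp hμ)
    calc q * S.natDegree ≤ q * (n - 1) := Nat.mul_le_mul_left _ this
      _ < N := Nat.lt_succ_self _
  have hKcoeff : ∀ j, (Sc ^ q).coeff j = K j := by
    intro j
    rw [← hmap, Polynomial.coeff_map]
    simp [hK]
  -- evaluate the hypothesis along the curve x μ = u^μ
  have heval : ∀ u : ℂ, ∑ α : Fin m, g α * (∑ j ∈ Finset.range N, K j * (θ α * u) ^ j) = 0 := by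
    intro u
    have h1 := congrFun hg (fun μ : Fin n => u ^ (μ : ℕ))
    simp only [Finset.sum_apply, Pi.smul_apply, smul_eq_mul, Pi.zero_apply] at h1
    rw [← h1]
    refine Finset.sum_congr rfl (fun α _ => ?_)
    congr 1
    have : (∑ μ : Fin n, θ α ^ (μ : ℕ) * u ^ (μ : ℕ)) = Polynomial.eval (θ α * u) Sc := by
      rw [hSc, Polynomial.eval_finset_sum]
      rw [Fin.sum_univ_eq_sum_range (fun μ => θ α ^ μ * u ^ μ)]
      simp [mul_pow]
    rw [this, ← Polynomial.eval_pow, Polynomial.eval_eq_sum_range' hdeg]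
    refine (Finset.sum_congr rfl (fun j _ => ?_)).symm
    rw [hKcoeff]
  -- turn into a polynomial identity in u
  have hcoeffzero : ∀ j, j < N → K j * (∑ α : Fin m, g α * θ α ^ j) = 0 := by
    have hpoly : (∑ j ∈ Finset.range N,
        Polynomial.C (K j * ∑ α : Fin m, g α * θ α ^ j) * Polynomial.X ^ j) = 0 := by
      apply Polynomial.funext
      intro u
      simp only [Polynomial.eval_finset_sum, Polynomial.eval_mul, Polynomial.eval_C,
        Polynomial.eval_pow, Polynomial.eval_X, Polynomial.eval_zero]
      rw [← heval u]
      have hexp : ∀ α : Fin m, g α * ∑ j ∈ Finset.range N, K j * (θ α * u) ^ j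
          = ∑ j ∈ Finset.range N, g α * (K j * (θ α * u) ^ j) := fun α => Finset.mul_sum _ _ _
      simp_rw [hexp]
      rw [Finset.sum_comm]
      refine Finset.sum_congr rfl fun j _ => ?_
      rw [Finset.mul_sum, Finset.sum_mul]
      exact Finset.sum_congr rfl fun α _ => by ring
    intro j hj
    have := congrArg (fun p => Polynomial.coeff p j) hpoly
    simp only [Polynomial.finset_sum_coeff, Polynomial.coeff_C_mul, Polynomial.coeff_X_pow,
      Polynomial.coeff_zero] at this
    rw [Finset.sum_eq_single j (fun b _ hb => by simp [Ne.symm hb])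
      (fun h => absurd (Finset.mem_range.mpr hj) h)] at this
    simpa using this
  -- the K j are nonzero, so we get Vandermonde relations
  have hvdm : ∀ j, j < N → (∑ α : Fin m, g α * θ α ^ j) = 0 := by
    intro j hj
    have hKj : K j ≠ 0 := by
      have hpos := coeff_geom_pow_pos n hn q j (Nat.lt_succ_iff.mp hj)
      rw [hK]
      exact_mod_cast Nat.cast_ne_zero.mpr (Nat.pos_iff_ne_zero.mp hpos)
    exact (mul_eq_zero.mp (hcoeffzero j hj)).resolve_left hKj
  -- conclude by Vandermonde
  have : g = 0 := by
    apply Matrix.eq_zero_of_forall_pow_sum_mul_pow_eq_zero hθ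
    intro i
    exact hvdm (i : ℕ) (lt_of_lt_of_le i.2 hm)
  exact fun α => congrFun this α


/-- For the linear forms l_α(x) = ∑_μ θ_α^μ x_μ with pairwise distinct θ_α,
the dimension of the span of the q-th powers equals min(d, q(n-1)+1). -/
theorem stmt4 (n d : ℕ) (hn : 2 ≤ n) (θ : Fin d → ℂ) (hθ : Function.Injective θ) :
    ∀ q : ℕ, Module.finrank ℂ
      (Submodule.span ℂ (Set.range fun α : Fin d =>
        fun x : Fin n → ℂ => (∑ μ : Fin n, θ α ^ (μ : ℕ) * x μ) ^ q))
      = min d (q * (n - 1) + 1) := by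
  intro q
  classical
  set N := q * (n - 1) + 1 with hN
  set f : Fin d → ((Fin n → ℂ) → ℂ) :=
    fun α => fun x : Fin n → ℂ => (∑ μ : Fin n, θ α ^ (μ : ℕ) * x μ) ^ q with hf
  -- coefficient functions
  set c : ℕ → ((Fin n → ℂ) → ℂ) := fun j => fun x =>
    ((∑ μ : Fin n, Polynomial.C (x μ) * Polynomial.X ^ (μ : ℕ)) ^ q).coeff j with hc
  have hfc : ∀ α, f α = ∑ j : Fin N, θ α ^ (j : ℕ) • c (j : ℕ) := by
    intro α
    funext x
    have hdeg : ((∑ μ : Fin n, Polynomial.C (x μ) * Polynomial.X ^ (μ : ℕ)) ^ q).natDegree < N :=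
      Nat.lt_succ_of_le (natDegree_lin_pow n q x)
    have h1 : f α x =
        Polynomial.eval (θ α) ((∑ μ : Fin n, Polynomial.C (x μ) * Polynomial.X ^ (μ : ℕ)) ^ q) := by
      rw [hf]
      rw [Polynomial.eval_pow, Polynomial.eval_finset_sum]
      simp only [Polynomial.eval_mul, Polynomial.eval_C, Polynomial.eval_pow, Polynomial.eval_X]
      exact congrArg (· ^ q) (Finset.sum_congr rfl fun μ _ => mul_comm _ _)
    rw [h1, Polynomial.eval_eq_sum_range' hdeg, Finset.sum_apply,
      Fin.sum_univ_eq_sum_range (fun j => (θ α ^ j • c j) x)]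
    refine Finset.sum_congr rfl fun j _ => ?_
    simp only [Pi.smul_apply, smul_eq_mul, hc]
    exact mul_comm _ _
  -- upper bound
  have hspan : Submodule.span ℂ (Set.range f)
      ≤ Submodule.span ℂ (Set.range fun j : Fin N => c (j : ℕ)) := by
    rw [Submodule.span_le]
    rintro _ ⟨α, rfl⟩
    rw [hfc α]
    exact Submodule.sum_mem _ fun j _ =>
      Submodule.smul_mem _ _ (Submodule.subset_span ⟨j, rfl⟩)
  haveI := FiniteDimensional.span_of_finite ℂ
    (Set.finite_range fun j : Fin N => c (j : ℕ))
  haveI := FiniteDimensional.span_of_finite ℂ (Set.finite_range f)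
  have hub1 : Module.finrank ℂ (Submodule.span ℂ (Set.range f)) ≤ N := by
    refine le_trans (Submodule.finrank_mono hspan) ?_
    simpa [Set.finrank] using finrank_range_le_card (R := ℂ) (fun j : Fin N => c (j : ℕ))
  have hub2 : Module.finrank ℂ (Submodule.span ℂ (Set.range f)) ≤ d := by
    simpa [Set.finrank] using finrank_range_le_card (R := ℂ) f
  -- lower bound
  have hmd : min d N ≤ d := min_le_left _ _
  have hmN : min d N ≤ N := min_le_right _ _
  have hind := indep_powers n q (min d N) (by omega) hmN (θ ∘ Fin.castLE hmd)
    (hθ.comp (Fin.castLE_injective hmd))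
  have hlb : min d N ≤ Module.finrank ℂ (Submodule.span ℂ (Set.range f)) := by
    have hcard := finrank_span_eq_card (R := ℂ) hind
    rw [Fintype.card_fin] at hcard
    have hsub : Submodule.span ℂ (Set.range fun β : Fin (min d N) =>
        fun x : Fin n → ℂ => (∑ μ : Fin n, (θ ∘ Fin.castLE hmd) β ^ (μ : ℕ) * x μ) ^ q)
        ≤ Submodule.span ℂ (Set.range f) := by
      refine Submodule.span_mono ?_
      rintro _ ⟨β, rfl⟩
      exact ⟨Fin.castLE hmd β, rfl⟩
    calc min d N = _ := hcard.symm
      _ ≤ _ := Submodule.finrank_mono hsub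
  omega
end

section
/- Let $m\ge 2$ and $d\le 2m+1$, and let $p_1,\dots,p_d$ be points of $\mathbb{P}^m$ in general position. Then the evaluation map from the space of quadratic forms on $\mathbb{C}^{m+1}$ to $\mathbb{C}^d$, sending $Q$ to $(Q(v_1),\dots,Q(v_d))$ for chosen representative vectors $v_i$, is surjective; equivalently, the subspace of quadrics vanishing at all $d$ points has codimension exactly $d$ in the space $\mathcal{O}_{m+1}(2)$ of quadratic forms. -/
/-- Auxiliary: a linear functional vanishing on `v '' T` but not at `v i`. -/
lemma stmt8_aux (m d : ℕ) (hd : d ≤ 2 * m + 1)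
    (v : Fin d → (Fin (m + 1) → ℂ))
    (hgen : ∀ s : Finset (Fin d), s.card ≤ m + 1 →
      LinearIndependent ℂ (fun i : s => v i))
    (i : Fin d) (T : Finset (Fin d)) (hiT : i ∉ T) (hT : T.card ≤ m) :
    ∃ f : (Fin (m + 1) → ℂ) →ₗ[ℂ] ℂ, f (v i) ≠ 0 ∧ ∀ j ∈ T, f (v j) = 0 := by
  -- linear independence on insert i T
  have hcard : (insert i T).card ≤ m + 1 := by
    rw [Finset.card_insert_of_notMem hiT]; omega
  have hli := hgen (insert i T) hcard
  -- v i ∉ span of v '' T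
  have hx : v i ∉ Submodule.span ℂ (v '' (T : Set (Fin d))) := by
    set T' : Finset (Fin d) := insert i T with hT'
    have hiT' : i ∈ T' := Finset.mem_insert_self i T
    set w : T' → (Fin (m + 1) → ℂ) := fun j => v j with hw
    have hset : v '' (T : Set (Fin d)) = w '' {j : T' | (j : Fin d) ∈ T} := by
      ext x
      constructor
      · rintro ⟨j, hj, rfl⟩
        exact ⟨⟨j, Finset.mem_insert_of_mem hj⟩, hj, rfl⟩
      · rintro ⟨j, hj, rfl⟩
        exact ⟨j, hj, rfl⟩
    rw [hset]
    have := hli.notMem_span_image (x := (⟨i, hiT'⟩ : T'))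
      (s := {j : T' | (j : Fin d) ∈ T}) (by simpa using hiT)
    exact this
  obtain ⟨f, hf1, hf2⟩ :=
    (Submodule.span ℂ (v '' (T : Set (Fin d)))).exists_dual_map_eq_bot_of_notMem hx inferInstance
  refine ⟨f, hf1, fun j hj => ?_⟩
  have hmem : v j ∈ Submodule.span ℂ (v '' (T : Set (Fin d))) :=
    Submodule.subset_span ⟨j, hj, rfl⟩
  have : f (v j) ∈ (Submodule.span ℂ (v '' (T : Set (Fin d)))).map f :=
    Submodule.mem_map_of_mem hmem
  rw [hf2] at this
  simpa using this

/-- Auxiliary: for each `i` there is a quadratic form (a product of two linear forms)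
nonzero at `v i` and vanishing at all other points. -/
lemma stmt8_quad (m d : ℕ) (hd : d ≤ 2 * m + 1)
    (v : Fin d → (Fin (m + 1) → ℂ))
    (hgen : ∀ s : Finset (Fin d), s.card ≤ m + 1 →
      LinearIndependent ℂ (fun i : s => v i))
    (i : Fin d) :
    ∃ Q : QuadraticForm ℂ (Fin (m + 1) → ℂ), Q (v i) ≠ 0 ∧ ∀ j ≠ i, Q (v j) = 0 := by
  set S : Finset (Fin d) := Finset.univ.erase i with hS
  have hScard : S.card ≤ 2 * m := by
    have : S.card = d - 1 := by
      rw [hS, Finset.card_erase_of_mem (Finset.mem_univ i), Finset.card_univ, Fintype.card_fin]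
    omega
  obtain ⟨A, hAS, hAcard⟩ := Finset.exists_subset_card_eq (min_le_left S.card m)
  set B : Finset (Fin d) := S \ A with hB
  have hBcard : B.card ≤ m := by
    rw [hB, Finset.card_sdiff_of_subset hAS, hAcard]
    omega
  have hiA : i ∉ A := fun h => (Finset.notMem_erase i _) (hAS h)
  have hiB : i ∉ B := fun h => (Finset.notMem_erase i _) (Finset.sdiff_subset h)
  obtain ⟨f, hf1, hf2⟩ := stmt8_aux m d hd v hgen i A hiA (by omega)
  obtain ⟨g, hg1, hg2⟩ := stmt8_aux m d hd v hgen i B hiB hBcard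
  refine ⟨QuadraticMap.linMulLin f g, ?_, ?_⟩
  · rw [QuadraticMap.linMulLin_apply]
    exact mul_ne_zero hf1 hg1
  · intro j hj
    rw [QuadraticMap.linMulLin_apply]
    have hjS : j ∈ S := Finset.mem_erase.2 ⟨hj, Finset.mem_univ j⟩
    by_cases hjA : j ∈ A
    · rw [hf2 j hjA, zero_mul]
    · rw [hg2 j (Finset.mem_sdiff.2 ⟨hjS, hjA⟩), mul_zero]

/-- d ≤ 2m+1 points of ℙ^m in general position impose d independent conditions
on quadrics: the evaluation map from quadratic forms to ℂ^d is surjective. -/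
theorem stmt8 (m d : ℕ) (hm : 2 ≤ m) (hd : d ≤ 2 * m + 1)
    (v : Fin d → (Fin (m + 1) → ℂ))
    (hgen : ∀ s : Finset (Fin d), s.card ≤ m + 1 →
      LinearIndependent ℂ (fun i : s => v i)) :
    Function.Surjective
      (fun Q : QuadraticForm ℂ (Fin (m + 1) → ℂ) => fun i : Fin d => Q (v i)) := by
  choose Qi hQi1 hQi2 using stmt8_quad m d hd v hgen
  intro w
  refine ⟨∑ i, (w i * (Qi i (v i))⁻¹) • Qi i, ?_⟩
  funext j
  simp only [QuadraticMap.sum_apply, QuadraticMap.smul_apply, smul_eq_mul]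
  rw [Finset.sum_eq_single j]
  · rw [mul_assoc, inv_mul_cancel₀ (hQi1 j), mul_one]
  · intro i _ hij
    rw [hQi2 i j (by exact fun h => hij (by rw [h])) , mul_zero]
  · intro h; exact absurd (Finset.mem_univ j) h
end

section
/- Let $n\ge 2$, $d\ge 2n-1$, and let $l_1,\dots,l_d$ be linear forms on $\mathbb{C}^n$ in general position. Let $B$ be a matrix whose rows form a basis of the solution space of $\sum_{\alpha=1}^d b_\alpha l_\alpha^2 = 0$ (of dimension $d - r_2$, where $r_2=\min(d,2n-1)=2n-1$, so $B$ has size $(d-2n+1)\times d$). Then every $(d-2n+1)\times(d-2n+1)$ submatrix of $B$ is invertible. -/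
open Finset Submodule LinearMap

/-- Lemma 2.1: a coefficient vector supported on at most `2n-1` indices whose
combination of squares of linear forms in general position vanishes must be zero. -/
lemma squares_lemma (n d : ℕ) (hn : 2 ≤ n)
    (l : Fin d → ((Fin n → ℂ) →ₗ[ℂ] ℂ))
    (hgen : ∀ s : Finset (Fin d), s.card ≤ n →
      LinearIndependent ℂ (fun α : s => l α))
    (b : Fin d → ℂ) (hb : ∀ x, ∑ α, b α * (l α x) ^ 2 = 0)
    (hsupp : (Finset.univ.filter fun α => b α ≠ 0).card ≤ 2 * n - 1) :
    b = 0 := by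
  classical
  by_contra hbne
  set S := Finset.univ.filter fun α : Fin d => b α ≠ 0 with hSdef
  have hSmem : ∀ α, α ∈ S ↔ b α ≠ 0 := fun α => by simp [hSdef]
  have hSne : S.Nonempty := by
    rcases Function.ne_iff.1 hbne with ⟨α, hα⟩
    exact ⟨α, (hSmem α).2 hα⟩
  -- polarization
  have key : ∀ x y, ∑ α, b α * l α x * l α y = 0 := by
    intro x y
    have e1 := hb (x + y)
    have h4 : ∑ α, b α * (l α (x + y)) ^ 2 =
        ∑ α, (b α * (l α x) ^ 2 + b α * (l α y) ^ 2 + 2 * (b α * l α x * l α y)) := by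
      refine Finset.sum_congr rfl fun α _ => ?_
      simp only [map_add]
      ring
    rw [e1, Finset.sum_add_distrib, Finset.sum_add_distrib, hb x, hb y,
      ← Finset.mul_sum] at h4
    have h5 := h4.symm
    simp only [zero_add] at h5
    rcases mul_eq_zero.1 h5 with h | h
    · exact absurd h two_ne_zero
    · exact h
  -- as an identity of functionals
  have keyfun : ∀ x, ∑ α, (b α * l α x) • l α = (0 : (Fin n → ℂ) →ₗ[ℂ] ℂ) := by
    intro x
    apply LinearMap.ext; intro y
    simp only [LinearMap.sum_apply, LinearMap.smul_apply, LinearMap.zero_apply,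
      smul_eq_mul, mul_assoc]
    simpa [mul_assoc] using key x y
  -- choose S1 ⊆ S of size min |S| n
  obtain ⟨S1, hS1sub, hS1card⟩ := S.exists_subset_card_eq (min_le_left S.card n)
  have hindep1 : LinearIndependent ℂ (fun α : S1 => l α) :=
    hgen S1 (hS1card ▸ min_le_right _ _)
  set W := span ℂ (((S \ S1).image l : Finset _) : Set ((Fin n → ℂ) →ₗ[ℂ] ℂ)) with hWdef
  -- each l β, β ∈ S1, lies in W
  have hmemW : ∀ β ∈ S1, l β ∈ W := by
    intro β hβ
    have hnotspan : l β ∉ span ℂ (Set.range fun α : ↥(S1.erase β) => l ↑α) := by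
      have h1 : l β ∉ span ℂ ((fun α : ↥S1 => l ↑α) '' {α : ↥S1 | (α : Fin d) ≠ β}) :=
        hindep1.notMem_span_image (s := {α : ↥S1 | (α : Fin d) ≠ β})
          (x := ⟨β, hβ⟩) (by simp)
      have hsetle : (Set.range fun α : ↥(S1.erase β) => l ↑α) ⊆
          (fun α : ↥S1 => l ↑α) '' {α : ↥S1 | (α : Fin d) ≠ β} := by
        rintro _ ⟨⟨α, hα⟩, rfl⟩
        rcases Finset.mem_erase.1 hα with ⟨hne, hαS1⟩
        exact ⟨⟨α, hαS1⟩, hne, rfl⟩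
      exact fun hmem => h1 (span_mono hsetle hmem)
    have hker : ¬ (⨅ α : ↥(S1.erase β), ker (l ↑α) ≤ ker (l β)) :=
      fun hle => hnotspan (mem_span_of_iInf_ker_le_ker hle)
    rw [SetLike.not_le_iff_exists] at hker
    obtain ⟨x, hx1, hx2⟩ := hker
    have hx0 : ∀ α ∈ S1.erase β, l α x = 0 := fun α hα =>
      (Submodule.mem_iInf _).1 hx1 ⟨α, hα⟩
    have hlbx : l β x ≠ 0 := hx2
    have hsum : ∑ α ∈ S, (b α * l α x) • l α = (0 : (Fin n → ℂ) →ₗ[ℂ] ℂ) := by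
      rw [← keyfun x]
      exact Finset.sum_subset (Finset.subset_univ S) (fun α _ hα => by
        have : b α = 0 := by_contra fun h => hα ((hSmem α).2 h)
        simp [this])
    rw [← Finset.sum_sdiff hS1sub] at hsum
    have hS1sum : ∑ α ∈ S1, (b α * l α x) • l α = (b β * l β x) • l β := by
      refine Finset.sum_eq_single_of_mem β hβ fun α hα hne => ?_
      rw [hx0 α (Finset.mem_erase.2 ⟨hne, hα⟩)]
      simp
    rw [hS1sum] at hsum
    have hbβ : b β ≠ 0 := (hSmem β).1 (hS1sub hβ)
    have hcoef : b β * l β x ≠ 0 := mul_ne_zero hbβ hlbx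
    have hneg : (b β * l β x) • l β = -∑ α ∈ S \ S1, (b α * l α x) • l α :=
      eq_neg_of_add_eq_zero_left (by rw [add_comm]; exact hsum)
    have hmem : (b β * l β x) • l β ∈ W := by
      rw [hneg]
      exact neg_mem (sum_mem fun α hα => smul_mem _ _ (subset_span (by
        simp only [Finset.coe_image, Set.mem_image, Finset.mem_coe]
        exact ⟨α, hα, rfl⟩)))
    have : l β = (b β * l β x)⁻¹ • ((b β * l β x) • l β) := by
      rw [smul_smul, inv_mul_cancel₀ hcoef, one_smul]
    rw [this]
    exact smul_mem _ _ hmem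
  -- rank count
  have hspanle : span ℂ (Set.range fun α : ↥S1 => l ↑α) ≤ W :=
    span_le.2 (by rintro _ ⟨α, rfl⟩; exact hmemW _ α.2)
  have h6 : Module.finrank ℂ (span ℂ (Set.range fun α : ↥S1 => l ↑α)) = S1.card := by
    rw [finrank_span_eq_card hindep1, Fintype.card_coe]
  have h7 : Module.finrank ℂ W ≤ (S \ S1).card := by
    have := finrank_span_finset_le_card (R := ℂ) ((S \ S1).image l)
    rw [Set.finrank] at this
    exact this.trans Finset.card_image_le
  have h8 : S1.card ≤ Module.finrank ℂ W := h6 ▸ Submodule.finrank_mono hspanle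
  have h9 : (S \ S1).card = S.card - S1.card := Finset.card_sdiff_of_subset hS1sub
  have hScard1 : 1 ≤ S.card := Finset.card_pos.2 hSne
  have h10 : S1.card ≤ S.card - S1.card := h9 ▸ h8.trans h7
  rw [hS1card] at h10
  omega

/-- If the rows of B form a basis of the solution space of ∑ b_α l_α² = 0 for
linear forms l_α in general position on ℂ^n (d ≥ 2n-1, the solution space having dimension
d-(2n-1)), then every (d-2n+1)×(d-2n+1) submatrix of B is invertible. -/
theorem stmt18 (n d : ℕ) (hn : 2 ≤ n) (hd : 2 * n - 1 ≤ d)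
    (l : Fin d → ((Fin n → ℂ) →ₗ[ℂ] ℂ))
    (hgen : ∀ s : Finset (Fin d), s.card ≤ n →
      LinearIndependent ℂ (fun α : s => l α))
    (B : Matrix (Fin (d - (2 * n - 1))) (Fin d) ℂ)
    (hindep : LinearIndependent ℂ (fun i => B i))
    (hsol : ∀ b : Fin d → ℂ,
      ((fun x : Fin n → ℂ => ∑ α, b α * (l α x) ^ 2) = 0) ↔
        b ∈ Submodule.span ℂ (Set.range fun i => B i)) :
    ∀ s : Finset (Fin d), s.card = d - (2 * n - 1) →
      LinearIndependent ℂ (fun α : s => fun i : Fin (d - (2 * n - 1)) => B i α) := by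
  classical
  intro s hcard
  by_contra hni
  have hcard' : Fintype.card ↥s = d - (2 * n - 1) := by rw [Fintype.card_coe, hcard]
  set e : Fin (d - (2 * n - 1)) ≃ ↥s := (Fintype.equivFinOfCardEq hcard').symm with hedef
  rw [← linearIndependent_equiv e] at hni
  obtain ⟨g, hg0, j₀, hj₀⟩ := Fintype.not_linearIndependent_iff.1 hni
  set A : Matrix (Fin (d - (2 * n - 1))) (Fin (d - (2 * n - 1))) ℂ :=
    Matrix.of fun i j => B i ((e j) : Fin d) with hAdef
  have hdet : A.det = 0 := by
    rw [← Matrix.exists_mulVec_eq_zero_iff]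
    refine ⟨g, fun h => hj₀ (congrFun h j₀), ?_⟩
    ext i
    have h1 := congrFun hg0 i
    simp only [Finset.sum_apply, Pi.smul_apply, smul_eq_mul, Function.comp_apply,
      Pi.zero_apply] at h1
    simp only [Matrix.mulVec, dotProduct, hAdef, Matrix.of_apply, Pi.zero_apply]
    rw [← h1]
    exact Finset.sum_congr rfl fun j _ => mul_comm _ _
  obtain ⟨u, hu0, huA⟩ := Matrix.exists_vecMul_eq_zero_iff.2 hdet
  set b : Fin d → ℂ := ∑ i, u i • B i with hbdef
  have hbapp : ∀ α, b α = ∑ i, u i * B i α := by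
    intro α
    simp [hbdef, Finset.sum_apply]
  have hbs : ∀ α ∈ s, b α = 0 := by
    intro α hα
    have h2 := congrFun huA (e.symm ⟨α, hα⟩)
    simp only [Matrix.vecMul, dotProduct, hAdef, Matrix.of_apply, Pi.zero_apply] at h2
    rw [hbapp]
    rw [← h2]
    refine Finset.sum_congr rfl fun i _ => ?_
    congr 2
    rw [Equiv.apply_symm_apply]
  have hbmem : b ∈ Submodule.span ℂ (Set.range fun i => B i) :=
    sum_mem fun i _ => smul_mem _ _ (subset_span ⟨i, rfl⟩)
  have hq := (hsol b).2 hbmem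
  have hbx : ∀ x, ∑ α, b α * (l α x) ^ 2 = 0 := fun x => by
    have := congrFun hq x; simpa using this
  have hsupp : (Finset.univ.filter fun α => b α ≠ 0).card ≤ 2 * n - 1 := by
    have hsub : (Finset.univ.filter fun α => b α ≠ 0) ⊆ sᶜ := by
      intro α hα
      rw [Finset.mem_compl]
      intro hαs
      exact (Finset.mem_filter.1 hα).2 (hbs α hαs)
    have := Finset.card_le_card hsub
    rw [Finset.card_compl, Fintype.card_fin, hcard] at this
    omega
  have hb0 : b = 0 := squares_lemma n d hn l hgen b hbx hsupp
  have : u = 0 := by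
    have h3 : ∑ i, u i • B i = 0 := by rw [← hbdef, hb0]
    funext i
    exact Fintype.linearIndependent_iff.1 hindep u h3 i
  exact hu0 this
end
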